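/- Let λ be a Ferrers diagram and N(m,n) the number of northeastern lattice paths from (m,0) to (0,n) avoiding the interior of λ. Then for all m ≥ 1 and n ≥ 0: N(m-1,n) * N(m+1,n) ≤ N(m,n)^2. -/

import Mathlib

/-- A northeastern lattice path from `(m,0)` to `(0,n)`: points `(i,j)` with `i` the row
(increasing southward) and `j` the column (increasing eastward); each step goes one unit
north (`i` decreases) or east (`j` increases). The point sequence is frozen at `(0,n)`
after `m+n` steps. -/
structure NEPath (m n : ℕ) where
  pts : ℕ → ℕ × ℕ
  start : pts 0 = (m, 0)
  step : ∀ k < m + n,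
    ((pts (k+1)).1 + 1 = (pts k).1 ∧ (pts (k+1)).2 = (pts k).2) ∨
    ((pts (k+1)).1 = (pts k).1 ∧ (pts (k+1)).2 = (pts k).2 + 1)
  tail : ∀ k, m + n ≤ k → pts k = (0, n)

/-- A path avoids (the interior of) the Ferrers diagram with row lengths `lam`
(rows indexed from the north starting at 0) iff each of its points `(i,j)` lies weakly
southeast of the staircase boundary, i.e. `lam i ≤ j`; touching the boundary is allowed. -/
def Avoids (lam : ℕ → ℕ) {m n : ℕ} (p : NEPath m n) : Prop :=
  ∀ k, lam (p.pts k).1 ≤ (p.pts k).2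

/-- `pathCount lam m n` is the number of northeastern lattice paths from `(m,0)` to `(0,n)`
that do not go inside the Ferrers diagram `lam`. -/
noncomputable def pathCount (lam : ℕ → ℕ) (m n : ℕ) : ℕ :=
  Nat.card {p : NEPath m n // Avoids lam p}

/-- `lam` is the row-length function of the Ferrers diagram of a partition:
weakly decreasing with finitely many nonzero rows. -/
def IsFerrers (lam : ℕ → ℕ) : Prop :=
  Antitone lam ∧ ∃ K, ∀ i, K ≤ i → lam i = 0

namespace NEPathAux

variable {m n : ℕ}

lemma ext' {p q : NEPath m n} (h : p.pts = q.pts) : p = q := by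
  cases p; cases q; simpa using h

/-- The column function of a path. -/
def ncol (p : NEPath m n) (k : ℕ) : ℕ := (p.pts k).2

lemma ncol_zero (p : NEPath m n) : ncol p 0 = 0 := by simp [ncol, p.start]

lemma ncol_tail (p : NEPath m n) {k : ℕ} (h : m + n ≤ k) : ncol p k = n := by
  simp [ncol, p.tail k h]

lemma ncol_step (p : NEPath m n) (k : ℕ) :
    ncol p (k+1) = ncol p k ∨ ncol p (k+1) = ncol p k + 1 := by
  rcases lt_or_ge k (m+n) with h | h
  · rcases p.step k h with ⟨_, h2⟩ | ⟨_, h2⟩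
    · exact Or.inl h2
    · exact Or.inr h2
  · left
    rw [ncol_tail p h, ncol_tail p (le_trans h (Nat.le_succ k))]

lemma ncol_mono (p : NEPath m n) : Monotone (ncol p) :=
  monotone_nat_of_le_succ fun k => by rcases ncol_step p k with h | h <;> omega

lemma ncol_le (p : NEPath m n) (k : ℕ) : ncol p k ≤ n := by
  rcases le_or_gt k (m+n) with h | h
  · calc ncol p k ≤ ncol p (m+n) := ncol_mono p h
      _ = n := ncol_tail p le_rfl
  · rw [ncol_tail p h.le]

lemma ncol_le_self (p : NEPath m n) (k : ℕ) : ncol p k ≤ k := by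
  induction k with
  | zero => rw [ncol_zero]
  | succ k ih => rcases ncol_step p k with h | h <;> omega

lemma row_add (p : NEPath m n) : ∀ k, k ≤ m + n → (p.pts k).1 + k = m + ncol p k := by
  intro k
  induction k with
  | zero => intro _; simp [p.start, ncol]
  | succ k ih =>
    intro h
    have H := ih (by omega)
    rcases p.step k (by omega) with ⟨h1, h2⟩ | ⟨h1, h2⟩ <;>
      simp only [ncol] at H ⊢ <;> omega

lemma row_le (p : NEPath m n) (k : ℕ) : (p.pts k).1 ≤ m := by
  rcases le_or_gt k (m+n) with h | h
  · have h1 := row_add p k h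
    have h2 := ncol_le_self p k
    omega
  · rw [p.tail k h.le]; exact Nat.zero_le _

lemma ext_col {p q : NEPath m n} (h : ∀ k, ncol p k = ncol q k) : p = q := by
  apply ext'
  funext k
  rcases le_or_gt k (m+n) with hk | hk
  · have h1 := row_add p k hk
    have h2 := row_add q k hk
    have h3 := h k
    simp only [ncol] at h1 h2 h3
    exact Prod.ext (by omega) h3
  · rw [p.tail k hk.le, q.tail k hk.le]

instance : Finite (NEPath m n) := by
  apply Finite.of_injective
    (fun (p : NEPath m n) (k : Fin (m+n+1)) =>
      ((⟨(p.pts k).1, Nat.lt_succ_of_le (row_le p k)⟩ : Fin (m+1)),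
       (⟨(p.pts k).2, Nat.lt_succ_of_le (ncol_le p k)⟩ : Fin (n+1))))
  intro p q h
  apply ext'
  funext k
  rcases le_or_gt k (m+n) with hk | hk
  · have := congrFun h ⟨k, by omega⟩
    simp only [Prod.mk.injEq, Fin.mk.injEq] at this
    exact Prod.ext this.1 this.2
  · rw [p.tail k hk.le, q.tail k hk.le]

section mk

variable (c : ℕ → ℕ)

lemma mk_lb (hstep : ∀ k, c (k+1) = c k ∨ c (k+1) = c k + 1)
    (htail : ∀ k, m + n ≤ k → c k = n) :
    ∀ j, j ≤ m + n → j ≤ m + c j := by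
  have key : ∀ j i, c (j + i) ≤ c j + i := by
    intro j i
    induction i with
    | zero => simp
    | succ i ih =>
      have e : j + (i+1) = (j+i)+1 := rfl
      rw [e]
      rcases hstep (j+i) with h | h <;> omega
  intro j hj
  have h2 := key j (m+n-j)
  rw [show j + (m+n-j) = m+n by omega, htail _ le_rfl] at h2
  omega

def mkPath (h0 : c 0 = 0)
    (hstep : ∀ k, c (k+1) = c k ∨ c (k+1) = c k + 1)
    (htail : ∀ k, m + n ≤ k → c k = n) : NEPath m n where
  pts k := (m + c k - k, c k)
  start := by simp [h0]
  step := by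
    intro k hk
    have l1 := mk_lb c hstep htail k hk.le
    have l2 := mk_lb c hstep htail (k+1) hk
    rcases hstep k with h | h
    · left; dsimp only; omega
    · right; dsimp only; omega
  tail := by
    intro k hk
    have h1 := htail k hk
    show (m + c k - k, c k) = (0, n)
    rw [h1]
    exact Prod.ext (by omega) rfl

variable (h0 : c 0 = 0)
  (hstep : ∀ k, c (k+1) = c k ∨ c (k+1) = c k + 1)
  (htail : ∀ k, m + n ≤ k → c k = n)

lemma mkPath_col (k : ℕ) : ncol (mkPath c h0 hstep htail) k = c k := rfl

lemma mkPath_avoids (lam : ℕ → ℕ)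
    (hav : ∀ k, k ≤ m + n → lam (m + c k - k) ≤ c k) :
    Avoids lam (mkPath c h0 hstep htail) := by
  intro k
  show lam (m + c k - k) ≤ c k
  rcases le_or_gt k (m+n) with hk | hk
  · exact hav k hk
  · have h1 := htail k hk.le
    have h2 := hav (m+n) le_rfl
    rw [htail (m+n) le_rfl] at h2
    rw [h1, show m + n - k = 0 by omega]
    simpa using h2

end mk

end NEPathAux

namespace NEPathAux

variable {M n : ℕ}

lemma exists_meet (p : NEPath M n) (q : NEPath (M+2) n) :
    ∃ k, 1 ≤ k ∧ ncol q k ≤ ncol p (k-1) := by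
  refine ⟨M+n+1, by omega, ?_⟩
  rw [show M+n+1-1 = M+n by omega, ncol_tail p le_rfl]
  exact ncol_le q _

/-- The first index at which the (shifted) paths meet. -/
def tIdx (p : NEPath M n) (q : NEPath (M+2) n) : ℕ := Nat.find (exists_meet p q)

lemma tIdx_pos (p : NEPath M n) (q : NEPath (M+2) n) : 1 ≤ tIdx p q :=
  (Nat.find_spec (exists_meet p q)).1

lemma tIdx_le (p : NEPath M n) (q : NEPath (M+2) n) : tIdx p q ≤ M+n+1 := by
  apply Nat.find_le
  refine ⟨by omega, ?_⟩
  rw [show M+n+1-1 = M+n by omega, ncol_tail p le_rfl]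
  exact ncol_le q _

lemma tIdx_lt (p : NEPath M n) (q : NEPath (M+2) n) {k : ℕ}
    (hk : 1 ≤ k) (h : k < tIdx p q) : ncol p (k-1) < ncol q k := by
  have h2 := Nat.find_min (exists_meet p q) h
  push_neg at h2
  exact h2 hk

lemma tIdx_eq (p : NEPath M n) (q : NEPath (M+2) n) :
    ncol q (tIdx p q) = ncol p (tIdx p q - 1) := by
  have hs : ncol q (tIdx p q) ≤ ncol p (tIdx p q - 1) :=
    (Nat.find_spec (exists_meet p q)).2
  have hpos := tIdx_pos p q
  rcases eq_or_lt_of_le hpos with h1 | h1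
  · -- t = 1
    rw [← h1] at hs ⊢
    rw [show (1:ℕ)-1 = 0 from rfl] at hs ⊢
    have h0 := ncol_zero p
    omega
  · -- t ≥ 2
    have h2 : ncol p (tIdx p q-1-1) < ncol q (tIdx p q-1) :=
      tIdx_lt p q (by omega) (by omega)
    have h3 : ncol q (tIdx p q-1) ≤ ncol q (tIdx p q) := ncol_mono q (by omega)
    have h4 := ncol_step p (tIdx p q-1-1)
    rw [show tIdx p q-1-1+1 = tIdx p q-1 by omega] at h4
    omega

section Phi

variable (p : NEPath M n) (q : NEPath (M+2) n)

/-- Column function of the first image path. -/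
def cF (k : ℕ) : ℕ := if k ≤ tIdx p q then ncol q k else ncol p (k-1)

/-- Column function of the second image path. -/
def dF (k : ℕ) : ℕ := if k ≤ tIdx p q - 1 then ncol p k else ncol q (k+1)

lemma cF_eq_p {k : ℕ} (hk : tIdx p q ≤ k) : cF p q k = ncol p (k-1) := by
  unfold cF
  split
  · have h : k = tIdx p q := le_antisymm ‹_› hk
    rw [h, tIdx_eq p q]
  · rfl

lemma dF_eq_q {k : ℕ} (hk : tIdx p q - 1 ≤ k) : dF p q k = ncol q (k+1) := by
  unfold dF
  split
  · have h : k = tIdx p q - 1 := le_antisymm ‹_› hk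
    have hpos := tIdx_pos p q
    rw [h, show tIdx p q - 1 + 1 = tIdx p q by omega, tIdx_eq p q]
  · rfl

lemma cF_zero : cF p q 0 = 0 := by
  rw [cF, if_pos (Nat.zero_le _), ncol_zero]

lemma cF_step (k : ℕ) : cF p q (k+1) = cF p q k ∨ cF p q (k+1) = cF p q k + 1 := by
  by_cases h : k + 1 ≤ tIdx p q
  · rw [cF, if_pos h, cF, if_pos (by omega)]
    exact ncol_step q k
  · have hpos := tIdx_pos p q
    rw [cF_eq_p p q (by omega), cF_eq_p p q (by omega)]
    have h2 := ncol_step p (k-1)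
    rw [show k-1+1 = k by omega] at h2
    rw [show k+1-1 = k by omega]
    exact h2

lemma cF_tail (k : ℕ) (hk : M+1+n ≤ k) : cF p q k = n := by
  have ht := tIdx_le p q
  rw [cF_eq_p p q (by omega)]
  exact ncol_tail p (by omega)

lemma dF_zero : dF p q 0 = 0 := by
  rw [dF, if_pos (Nat.zero_le _), ncol_zero]

lemma dF_step (k : ℕ) : dF p q (k+1) = dF p q k ∨ dF p q (k+1) = dF p q k + 1 := by
  by_cases h : k + 1 ≤ tIdx p q - 1
  · rw [dF, if_pos h, dF, if_pos (by omega)]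
    exact ncol_step p k
  · rw [dF_eq_q p q (by omega), dF_eq_q p q (by omega)]
    exact ncol_step q (k+1)

lemma dF_tail (k : ℕ) (hk : M+1+n ≤ k) : dF p q k = n := by
  have ht := tIdx_le p q
  rw [dF_eq_q p q (by omega)]
  exact ncol_tail q (by omega)

/-- The first image path. -/
def cPath : NEPath (M+1) n :=
  mkPath (cF p q) (cF_zero p q) (cF_step p q) (cF_tail p q)

/-- The second image path. -/
def dPath : NEPath (M+1) n :=
  mkPath (dF p q) (dF_zero p q) (dF_step p q) (dF_tail p q)

lemma ncol_cPath (k : ℕ) : ncol (cPath p q) k = cF p q k := rfl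
lemma ncol_dPath (k : ℕ) : ncol (dPath p q) k = dF p q k := rfl

variable {lam : ℕ → ℕ}

lemma cPath_avoids (hlam : IsFerrers lam) (hp : Avoids lam p) (hq : Avoids lam q) :
    Avoids lam (cPath p q) := by
  apply mkPath_avoids
  intro k hk
  rcases Nat.eq_zero_or_pos k with rfl | hk1
  · rw [cF_zero p q]
    have hp0 : lam M ≤ 0 := by have h := hp 0; rw [p.start] at h; exact h
    simp only [Nat.sub_zero, Nat.add_zero]
    have : lam (M+1) ≤ lam M := hlam.1 (Nat.le_succ M)
    omega
  rcases lt_or_ge k (tIdx p q) with hlt | hge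
  · -- 1 ≤ k < t : point is q's point shifted north
    have hcf : cF p q k = ncol q k := if_pos (le_of_lt hlt)
    have hab := tIdx_lt p q hk1 hlt
    have hrow := row_add p (k-1) (by have := tIdx_le p q; omega)
    have hpk := hp (k-1)
    have hcol : (p.pts (k-1)).2 = ncol p (k-1) := rfl
    rw [hcf]
    have hmono : lam (M+1+ncol q k - k) ≤ lam ((p.pts (k-1)).1) :=
      hlam.1 (by omega)
    omega
  · -- k ≥ t : point equals p's point at k-1
    rw [cF_eq_p p q hge]
    have hrow := row_add p (k-1) (by omega)
    have hpk := hp (k-1)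
    have hcol : (p.pts (k-1)).2 = ncol p (k-1) := rfl
    have hpos := tIdx_pos p q
    rw [show M+1+ncol p (k-1) - k = (p.pts (k-1)).1 by omega]
    omega

lemma dPath_avoids (hlam : IsFerrers lam) (hp : Avoids lam p) (hq : Avoids lam q) :
    Avoids lam (dPath p q) := by
  apply mkPath_avoids
  intro k hk
  rcases le_or_gt k (tIdx p q - 1) with hle | hgt
  · -- point is p's point shifted south
    have hdf : dF p q k = ncol p k := if_pos hle
    have hrow := row_add p k (by have := tIdx_le p q; omega)
    have hpk := hp k
    have hcol : (p.pts k).2 = ncol p k := rfl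
    rw [hdf, show M+1+ncol p k - k = (p.pts k).1 + 1 by omega]
    have hmono : lam ((p.pts k).1 + 1) ≤ lam ((p.pts k).1) := hlam.1 (Nat.le_succ _)
    omega
  · -- point equals q's point at k+1
    rw [dF_eq_q p q (by omega)]
    have hrow := row_add q (k+1) (by omega)
    have hqk := hq (k+1)
    have hcol : (q.pts (k+1)).2 = ncol q (k+1) := rfl
    rw [show M+1+ncol q (k+1) - k = (q.pts (k+1)).1 by omega]
    omega

end Phi

lemma inj_main {p p' : NEPath M n} {q q' : NEPath (M+2) n}
    (hc : ∀ k, cF p q k = cF p' q' k) (hd : ∀ k, dF p q k = dF p' q' k) :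
    p = p' ∧ q = q' := by
  have hpos := tIdx_pos p q
  have hpos' := tIdx_pos p' q'
  set t := tIdx p q with ht
  set t' := tIdx p' q' with ht'
  have key : ∀ (a : NEPath M n) (b : NEPath (M+2) n),
      cF a b (tIdx a b) = dF a b (tIdx a b - 1) := by
    intro a b
    rw [cF, if_pos le_rfl, dF, if_pos le_rfl, tIdx_eq a b]
  have htt : t = t' := by
    rcases lt_trichotomy t t' with h | h | h
    · exfalso
      have e1 := key p q
      have e2 : cF p' q' t = ncol q' t := if_pos h.le
      have e3 : dF p' q' (t-1) = ncol p' (t-1) := if_pos (by omega)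
      have e4 := tIdx_lt p' q' hpos h
      have e5 := hc t
      have e6 := hd (t-1)
      rw [← ht] at e1
      omega
    · exact h
    · exfalso
      have e1 := key p' q'
      have e2 : cF p q t' = ncol q t' := if_pos h.le
      have e3 : dF p q (t'-1) = ncol p (t'-1) := if_pos (by omega)
      have e4 := tIdx_lt p q hpos' h
      have e5 := hc t'
      have e6 := hd (t'-1)
      rw [← ht'] at e1
      omega
  constructor
  · apply ext_col
    intro j
    rcases le_or_gt j (t-1) with hj | hj
    · have h1 : dF p q j = ncol p j := if_pos hj
      have h2 : dF p' q' j = ncol p' j := if_pos (by omega)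
      have := hd j
      omega
    · have h1 : cF p q (j+1) = ncol p j := by
        rw [cF_eq_p p q (by omega)]; congr 1
      have h2 : cF p' q' (j+1) = ncol p' j := by
        rw [cF_eq_p p' q' (by omega)]; congr 1
      have := hc (j+1)
      omega
  · apply ext_col
    intro j
    rcases le_or_gt j t with hj | hj
    · have h1 : cF p q j = ncol q j := if_pos hj
      have h2 : cF p' q' j = ncol q' j := if_pos (by omega)
      have := hc j
      omega
    · have h1 : dF p q (j-1) = ncol q j := by
        rw [dF_eq_q p q (by omega), show j-1+1 = j by omega]
      have h2 : dF p' q' (j-1) = ncol q' j := by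
        rw [dF_eq_q p' q' (by omega), show j-1+1 = j by omega]
      have := hd (j-1)
      omega

end NEPathAux


open NEPathAux in
/-- Equation (2) of the paper, proved by the injection Φ. -/
theorem simion_eq_two (lam : ℕ → ℕ) (hlam : IsFerrers lam)
    (m n : ℕ) (hm : 1 ≤ m) :
    pathCount lam (m - 1) n * pathCount lam (m + 1) n ≤ pathCount lam m n ^ 2 := by
  obtain ⟨M, rfl⟩ : ∃ M, m = M + 1 := ⟨m - 1, by omega⟩
  show pathCount lam M n * pathCount lam (M + 2) n ≤ pathCount lam (M + 1) n ^ 2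
  classical
  let F : ({p : NEPath M n // Avoids lam p} × {q : NEPath (M+2) n // Avoids lam q}) →
      ({r : NEPath (M+1) n // Avoids lam r} × {r : NEPath (M+1) n // Avoids lam r}) :=
    fun x => (⟨cPath x.1.1 x.2.1, cPath_avoids x.1.1 x.2.1 hlam x.1.2 x.2.2⟩,
              ⟨dPath x.1.1 x.2.1, dPath_avoids x.1.1 x.2.1 hlam x.1.2 x.2.2⟩)
  have hF : Function.Injective F := by
    rintro ⟨⟨p, hp⟩, ⟨q, hq⟩⟩ ⟨⟨p', hp'⟩, ⟨q', hq'⟩⟩ h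
    simp only [F, Prod.mk.injEq, Subtype.mk.injEq] at h
    have hc : ∀ k, cF p q k = cF p' q' k := fun k =>
      congrArg (fun r => ncol r k) h.1
    have hd : ∀ k, dF p q k = dF p' q' k := fun k =>
      congrArg (fun r => ncol r k) h.2
    obtain ⟨h1, h2⟩ := inj_main hc hd
    simp [h1, h2]
  calc pathCount lam M n * pathCount lam (M+2) n
      = Nat.card ({p : NEPath M n // Avoids lam p} ×
          {q : NEPath (M+2) n // Avoids lam q}) := (Nat.card_prod _ _).symm
    _ ≤ Nat.card ({r : NEPath (M+1) n // Avoids lam r} ×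
          {r : NEPath (M+1) n // Avoids lam r}) := Nat.card_le_card_of_injective F hF
    _ = pathCount lam (M+1) n ^ 2 := by rw [Nat.card_prod, sq]; rfl
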